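/- Let m < M be positive integers, let A be a probability distribution on {0,1,...,m}, and let S ⊆ {1,...,M} with |S| = m. For every subset T ⊆ {1,...,M}, the Fourier coefficient of the hidden junta distribution satisfies: (i) if T ⊄ S then Ê := E_{X∼P_S^A}[χ_T(X)] = 0; (ii) if T ⊆ S with |T| = j, then E_{X∼P_S^A}[χ_T(X)] = a_j / binom(m,j), where a_j := E_{t∼A}[K_j(t;m)]. -/

import Mathlib

open Finset

/-- The Kravchuk polynomial value `K_j(x; m)`. -/
noncomputable def kravchuk (m j x : ℕ) : ℝ :=
  ∑ r ∈ Finset.range (j + 1),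
    (-1 : ℝ) ^ r * (x.choose r : ℝ) * ((m - x).choose (j - r) : ℝ)

/-- `Σ_{i ∈ S} x_i` for `x ∈ {0,1}^M`. -/
def bitSum {M : ℕ} (S : Finset (Fin M)) (x : Fin M → Bool) : ℕ :=
  (S.filter fun i => x i = true).card

/-- The hidden junta distribution `P_S^A` on `{0,1}^M`. -/
noncomputable def juntaPMF (M m : ℕ) (A : ℕ → ℝ) (S : Finset (Fin M))
    (x : Fin M → Bool) : ℝ :=
  (2 : ℝ) ^ m / (2 : ℝ) ^ M * A (bitSum S x) / (m.choose (bitSum S x) : ℝ)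

/-- The character `χ_T(x) = (−1)^{Σ_{i∈T} x_i}`. -/
noncomputable def charFn {M : ℕ} (T : Finset (Fin M)) (x : Fin M → Bool) : ℝ :=
  (-1 : ℝ) ^ (bitSum T x)

lemma choose_four_eq (n a b : ℕ) :
    n.choose a * (n - a).choose b = n.choose b * (n - b).choose a := by
  rcases le_or_gt (a + b) n with h | h
  · have h1 := Nat.choose_mul (n := n) (k := a + b) (s := a) (Nat.le_add_right a b)
    have h2 := Nat.choose_mul (n := n) (k := a + b) (s := b) (Nat.le_add_left b a)
    have h3 : (a + b).choose a = (a + b).choose b := Nat.choose_symm_add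
    have e1 : a + b - a = b := by omega
    have e2 : a + b - b = a := by omega
    rw [e1] at h1; rw [e2] at h2
    rw [← h1, h3, h2]
  · rcases le_or_gt a n with ha | ha
    · rcases le_or_gt b n with hb | hb
      · rw [Nat.choose_eq_zero_of_lt (show n - a < b by omega),
          Nat.choose_eq_zero_of_lt (show n - b < a by omega), mul_zero, mul_zero]
      · rw [Nat.choose_eq_zero_of_lt hb, Nat.choose_eq_zero_of_lt (show n - a < b by omega),
          mul_zero, zero_mul]
    · rcases le_or_gt b n with hb | hb
      · rw [Nat.choose_eq_zero_of_lt ha, Nat.choose_eq_zero_of_lt (show n - b < a by omega),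
          mul_zero, zero_mul]
      · rw [Nat.choose_eq_zero_of_lt ha, Nat.choose_eq_zero_of_lt hb, zero_mul, zero_mul]

lemma choose_trin {m j t r : ℕ} (hr : r ≤ t) (ht : t ≤ j) (hj : j ≤ m) :
    m.choose j * (j.choose r * (m - j).choose (t - r)) =
      m.choose t * (t.choose r * (m - t).choose (j - r)) := by
  have h1 : m.choose j * j.choose r = m.choose r * (m - r).choose (j - r) :=
    Nat.choose_mul (hr.trans ht)
  have h2 : m.choose t * t.choose r = m.choose r * (m - r).choose (t - r) :=
    Nat.choose_mul hr
  have h4 := choose_four_eq (m - r) (j - r) (t - r)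
  have e1 : m - r - (j - r) = m - j := by omega
  have e2 : m - r - (t - r) = m - t := by omega
  rw [e1, e2] at h4
  calc m.choose j * (j.choose r * (m - j).choose (t - r))
      = m.choose j * j.choose r * (m - j).choose (t - r) := by ring
    _ = m.choose r * ((m - r).choose (j - r) * (m - j).choose (t - r)) := by rw [h1]; ring
    _ = m.choose r * ((m - r).choose (t - r) * (m - t).choose (j - r)) := by rw [h4]
    _ = m.choose t * t.choose r * (m - t).choose (j - r) := by rw [h2]; ring
    _ = _ := by ring

lemma kravchuk_symm_aux {m t j : ℕ} (ht : t ≤ j) (hj : j ≤ m) :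
    (m.choose j : ℝ) * kravchuk m t j = (m.choose t : ℝ) * kravchuk m j t := by
  unfold kravchuk
  rw [Finset.mul_sum, Finset.mul_sum]
  rw [show ∑ r ∈ Finset.range (j + 1), (m.choose t : ℝ) *
        ((-1 : ℝ) ^ r * (t.choose r : ℝ) * ((m - t).choose (j - r) : ℝ)) =
      ∑ r ∈ Finset.range (t + 1), (m.choose t : ℝ) *
        ((-1 : ℝ) ^ r * (t.choose r : ℝ) * ((m - t).choose (j - r) : ℝ)) from
    (Finset.sum_subset (Finset.range_subset_range.2 (by omega)) (fun r _ hr => by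
      rw [Nat.choose_eq_zero_of_lt (n := t) (k := r) (by simpa [Nat.lt_succ_iff] using hr)]
      push_cast; ring)).symm]
  refine Finset.sum_congr rfl fun r hr => ?_
  have hr' : r ≤ t := by simpa [Nat.lt_succ_iff] using hr
  have key : (m.choose j : ℝ) * ((j.choose r : ℝ) * ((m - j).choose (t - r) : ℝ))
      = (m.choose t : ℝ) * ((t.choose r : ℝ) * ((m - t).choose (j - r) : ℝ)) := by
    exact_mod_cast choose_trin hr' ht hj
  linear_combination ((-1 : ℝ) ^ r) * key

lemma kravchuk_symm {m t j : ℕ} (ht : t ≤ m) (hj : j ≤ m) :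
    (m.choose j : ℝ) * kravchuk m t j = (m.choose t : ℝ) * kravchuk m j t := by
  rcases le_total t j with h | h
  · exact kravchuk_symm_aux h hj
  · exact (kravchuk_symm_aux h ht).symm

lemma fiber_card {M : ℕ} (S V : Finset (Fin M)) (hV : V ⊆ S) :
    ((univ : Finset (Fin M → Bool)).filter
      (fun x => S.filter (fun i => x i = true) = V)).card = 2 ^ (M - S.card) := by
  have hset : ((univ : Finset (Fin M → Bool)).filter
      (fun x => S.filter (fun i => x i = true) = V))
      = Fintype.piFinset (fun i => if i ∈ S then ({decide (i ∈ V)} : Finset Bool) else univ) := by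
    ext x
    simp only [mem_filter, mem_univ, true_and, Fintype.mem_piFinset]
    constructor
    · intro h i
      by_cases hi : i ∈ S
      · have : i ∈ V ↔ x i = true := by rw [← h]; simp [hi]
        simp only [if_pos hi, mem_singleton]
        cases hx : x i
        · simp [hx] at this; simp [this]
        · simp [hx] at this; simp [this]
      · simp [hi]
    · intro h
      ext i
      simp only [mem_filter]
      constructor
      · rintro ⟨hiS, hxi⟩
        have := h i
        rw [if_pos hiS, mem_singleton, hxi] at this
        simpa using this.symm
      · intro hiV
        refine ⟨hV hiV, ?_⟩
        have := h i
        rw [if_pos (hV hiV), mem_singleton] at this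
        simpa [hiV] using this
  rw [hset, Fintype.card_piFinset]
  have hcard : ∀ i : Fin M, (if i ∈ S then ({decide (i ∈ V)} : Finset Bool) else univ).card
      = if i ∈ S then 1 else 2 := by
    intro i; by_cases hi : i ∈ S <;> simp [hi]
  rw [Finset.prod_congr rfl (fun i _ => hcard i), Finset.prod_ite, Finset.prod_const,
    Finset.prod_const, one_pow, one_mul]
  congr 1
  have : (univ : Finset (Fin M)).filter (fun i => i ∉ S) = Sᶜ := by ext i; simp
  rw [this, Finset.card_compl, Fintype.card_fin]

lemma bitSum_update_of_not_mem {M : ℕ} {S : Finset (Fin M)} {i : Fin M} (hi : i ∉ S)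
    (x : Fin M → Bool) (b : Bool) : bitSum S (Function.update x i b) = bitSum S x := by
  unfold bitSum
  congr 1
  apply Finset.filter_congr
  intro a ha
  rw [Function.update_of_ne (by rintro rfl; exact hi ha)]

lemma bitSum_split {M : ℕ} {T : Finset (Fin M)} {i : Fin M} (hi : i ∈ T) (y : Fin M → Bool) :
    bitSum T y = bitSum (T.erase i) y + (if y i = true then 1 else 0) := by
  unfold bitSum
  conv_lhs => rw [← Finset.insert_erase hi]
  rw [Finset.filter_insert]
  by_cases h : y i = true
  · rw [if_pos h, Finset.card_insert_of_notMem (by simp), if_pos h]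
  · rw [if_neg h, if_neg h, add_zero]

lemma charFn_update {M : ℕ} {T : Finset (Fin M)} {i : Fin M} (hi : i ∈ T) (x : Fin M → Bool) :
    charFn T (Function.update x i (!x i)) = -charFn T x := by
  unfold charFn
  rw [bitSum_split hi, bitSum_split hi x,
    bitSum_update_of_not_mem (Finset.notMem_erase i T)]
  rw [Function.update_self]
  cases h : x i <;> simp [pow_add]

lemma powerset_split {M : ℕ} {S T : Finset (Fin M)} (hTS : T ⊆ S) (f : ℕ → ℕ → ℝ) :
    ∑ V ∈ S.powerset, f (V ∩ T).card (V \ T).card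
      = ∑ P ∈ T.powerset, ∑ Q ∈ (S \ T).powerset, f P.card Q.card := by
  classical
  rw [← Finset.sum_product' (s := T.powerset) (t := (S \ T).powerset)
    (f := fun P Q => f P.card Q.card)]
  refine Finset.sum_nbij' (fun V => (V ∩ T, V \ T)) (fun p => p.1 ∪ p.2) ?_ ?_ ?_ ?_ ?_
  · intro V hV
    rw [Finset.mem_powerset] at hV
    simp only [Finset.mem_product, Finset.mem_powerset]
    constructor
    · exact Finset.inter_subset_right
    · intro a ha
      simp only [Finset.mem_sdiff] at ha ⊢
      exact ⟨hV ha.1, ha.2⟩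
  · intro p hp
    simp only [Finset.mem_product, Finset.mem_powerset] at hp
    rw [Finset.mem_powerset]
    exact Finset.union_subset (hp.1.trans hTS) (hp.2.trans (Finset.sdiff_subset))
  · intro V _
    ext a
    simp only [Finset.mem_union, Finset.mem_inter, Finset.mem_sdiff]
    tauto
  · intro p hp
    simp only [Finset.mem_product, Finset.mem_powerset] at hp
    obtain ⟨h1, h2⟩ := hp
    have h3 : ∀ a ∈ p.2, a ∉ T := fun a ha => (Finset.mem_sdiff.1 (h2 ha)).2
    refine Prod.ext ?_ ?_ <;> ext a <;>
      simp only [Finset.mem_inter, Finset.mem_union, Finset.mem_sdiff] <;>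
      constructor
    · rintro ⟨h | h, haT⟩
      · exact h
      · exact absurd haT (h3 a h)
    · intro h; exact ⟨Or.inl h, h1 h⟩
    · rintro ⟨h | h, haT⟩
      · exact absurd (h1 h) haT
      · exact h
    · intro h; exact ⟨Or.inr h, h3 a h⟩
  · intro V _; rfl

lemma diag_sum {m j : ℕ} (hj : j ≤ m) (B : ℕ → ℝ) :
    ∑ r ∈ Finset.range (j + 1), (j.choose r : ℝ) *
      ∑ q ∈ Finset.range (m - j + 1), ((m - j).choose q : ℝ) * (B (r + q) * (-1 : ℝ) ^ r)
    = ∑ t ∈ Finset.range (m + 1), B t *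
        (∑ r ∈ Finset.range (t + 1),
          (-1 : ℝ) ^ r * (j.choose r : ℝ) * ((m - j).choose (t - r) : ℝ)) := by
  have step1 : ∀ r, r ≤ j →
      ∑ q ∈ Finset.range (m - j + 1), ((m - j).choose q : ℝ) * (B (r + q) * (-1 : ℝ) ^ r)
      = ∑ t ∈ Finset.Ico r (m + 1), ((m - j).choose (t - r) : ℝ) * (B t * (-1 : ℝ) ^ r) := by
    intro r hr
    rw [Finset.sum_Ico_eq_sum_range]
    symm
    rw [show m + 1 - r = (m - j + 1) + (j - r) by omega, Finset.sum_range_add]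
    have h0 : ∀ q ∈ Finset.range (m - j + 1),
        ((m - j).choose q : ℝ) * (B (r + q) * (-1 : ℝ) ^ r)
        = ((m - j).choose (r + q - r) : ℝ) * (B (r + q) * (-1 : ℝ) ^ r) := by
      intro q _; rw [show r + q - r = q by omega]

    have h1 : ∀ q ∈ Finset.range (j - r),
        ((m - j).choose (r + ((m - j + 1) + q) - r) : ℝ) *
          (B (r + ((m - j + 1) + q)) * (-1 : ℝ) ^ r) = 0 := by
      intro q _
      rw [Nat.choose_eq_zero_of_lt (by omega)]
      simp
    rw [Finset.sum_congr rfl h1, Finset.sum_const_zero, add_zero,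
      Finset.sum_congr rfl fun q hq => (h0 q hq).symm]
  rw [Finset.sum_congr rfl (fun r hr =>
    congrArg _ (step1 r (by simpa [Nat.lt_succ_iff] using hr)))]
  have step2 : ∑ r ∈ Finset.range (j + 1), (j.choose r : ℝ) *
      ∑ t ∈ Finset.Ico r (m + 1), ((m - j).choose (t - r) : ℝ) * (B t * (-1 : ℝ) ^ r)
      = ∑ r ∈ Finset.range (m + 1), (j.choose r : ℝ) *
      ∑ t ∈ Finset.Ico r (m + 1), ((m - j).choose (t - r) : ℝ) * (B t * (-1 : ℝ) ^ r) := by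
    apply Finset.sum_subset (Finset.range_subset_range.2 (by omega))
    intro r _ hr
    rw [Nat.choose_eq_zero_of_lt (n := j) (k := r) (by simpa [Nat.lt_succ_iff] using hr)]
    simp
  rw [step2]
  rw [Finset.range_eq_Ico]
  rw [show (∑ r ∈ Finset.Ico 0 (m + 1), (j.choose r : ℝ) *
      ∑ t ∈ Finset.Ico r (m + 1), ((m - j).choose (t - r) : ℝ) * (B t * (-1 : ℝ) ^ r))
    = ∑ r ∈ Finset.Ico 0 (m + 1), ∑ t ∈ Finset.Ico r (m + 1),
      (j.choose r : ℝ) * (((m - j).choose (t - r) : ℝ) * (B t * (-1 : ℝ) ^ r)) from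
    Finset.sum_congr rfl fun r _ => Finset.mul_sum _ _ _]
  rw [Finset.sum_Ico_Ico_comm]
  refine Finset.sum_congr rfl fun t _ => ?_
  rw [Finset.mul_sum, ← Finset.range_eq_Ico]
  refine Finset.sum_congr rfl fun r _ => by ring

/-- Fourier coefficients of the hidden junta distribution:
they vanish off `S`, and on subsets `T ⊆ S` of size `j` they equal
`E_{t∼A}[K_j(t;m)] / binom(m, j)`. -/
theorem junta_fourier_coefficients (m M : ℕ) (hm : 0 < m) (hmM : m < M)
    (A : ℕ → ℝ) (hA0 : ∀ x, 0 ≤ A x) (hAsupp : ∀ x, m < x → A x = 0)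
    (hA1 : ∑ x ∈ Finset.range (m + 1), A x = 1)
    (S : Finset (Fin M)) (hS : S.card = m) (T : Finset (Fin M)) :
    (¬ T ⊆ S →
      ∑ x : Fin M → Bool, juntaPMF M m A S x * charFn T x = 0) ∧
    (T ⊆ S →
      ∑ x : Fin M → Bool, juntaPMF M m A S x * charFn T x =
        (∑ t ∈ Finset.range (m + 1), A t * kravchuk m T.card t) /
          (m.choose T.card : ℝ)) := by
  constructor
  · -- T ⊄ S
    intro hTS
    obtain ⟨i, hiT, hiS⟩ := Finset.not_subset.1 hTS
    apply Finset.sum_ninvolution (fun x => Function.update x i (!x i))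
    · intro x
      have hP : juntaPMF M m A S (Function.update x i (!x i)) = juntaPMF M m A S x := by
        unfold juntaPMF; rw [bitSum_update_of_not_mem hiS]
      rw [hP, charFn_update hiT]; ring
    · intro x _ h
      have := congrFun h i
      rw [Function.update_self] at this
      simp at this
    · intro x; exact Finset.mem_univ _
    · intro x
      funext a
      by_cases ha : a = i
      · subst ha; simp [Function.update_self]
      · simp [Function.update_of_ne ha]
  · -- T ⊆ S
    intro hTS
    classical
    have hjm : T.card ≤ m := by rw [← hS]; exact Finset.card_le_card hTS
    have hsd : (S \ T).card = m - T.card := by rw [Finset.card_sdiff_of_subset hTS, hS]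
    calc ∑ x : Fin M → Bool, juntaPMF M m A S x * charFn T x
        = ∑ V ∈ S.powerset, ∑ x ∈ (univ : Finset (Fin M → Bool)).filter
            (fun x => S.filter (fun i => x i = true) = V),
            juntaPMF M m A S x * charFn T x :=
          (Finset.sum_fiberwise_of_maps_to
            (fun x _ => Finset.mem_powerset.2 (Finset.filter_subset _ _)) _).symm
      _ = ∑ V ∈ S.powerset, A V.card / (m.choose V.card : ℝ) * (-1 : ℝ) ^ (V ∩ T).card := by
          refine Finset.sum_congr rfl fun V hV => ?_
          rw [Finset.mem_powerset] at hV
          have hterm : ∀ x ∈ (univ : Finset (Fin M → Bool)).filter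
              (fun x => S.filter (fun i => x i = true) = V),
              juntaPMF M m A S x * charFn T x
              = (2 : ℝ) ^ m / (2 : ℝ) ^ M * A V.card / (m.choose V.card : ℝ)
                  * (-1 : ℝ) ^ (V ∩ T).card := by
            intro x hx
            rw [Finset.mem_filter] at hx
            have hV' : S.filter (fun i => x i = true) = V := hx.2
            have hbS : bitSum S x = V.card := by unfold bitSum; rw [hV']
            have hbT : bitSum T x = (V ∩ T).card := by
              unfold bitSum
              congr 1
              rw [← hV']
              ext a
              simp only [Finset.mem_filter, Finset.mem_inter]
              constructor
              · rintro ⟨h1, h2⟩; exact ⟨⟨hTS h1, h2⟩, h1⟩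
              · rintro ⟨⟨_, h2⟩, h3⟩; exact ⟨h3, h2⟩
            unfold juntaPMF charFn
            rw [hbS, hbT]
          rw [Finset.sum_congr rfl hterm, Finset.sum_const, fiber_card S V hV, hS,
            nsmul_eq_mul]
          have h2 : ((2 : ℝ)) ^ M = 2 ^ (M - m) * 2 ^ m := by
            rw [← pow_add]; congr 1; omega
          have hne : ((2 : ℝ)) ^ (M - m) ≠ 0 := by positivity
          have hne2 : ((2 : ℝ)) ^ m ≠ 0 := by positivity
          push_cast
          have key : (2 : ℝ) ^ (M - m) * ((2 : ℝ) ^ m / (2 : ℝ) ^ M) = 1 := by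
            rw [h2]; field_simp
          linear_combination
            (A V.card / (m.choose V.card : ℝ) * (-1 : ℝ) ^ (V ∩ T).card) * key
      _ = ∑ V ∈ S.powerset,
            A ((V ∩ T).card + (V \ T).card) / (m.choose ((V ∩ T).card + (V \ T).card) : ℝ)
              * (-1 : ℝ) ^ (V ∩ T).card := by
          refine Finset.sum_congr rfl fun V _ => ?_
          rw [Finset.card_inter_add_card_sdiff]
      _ = ∑ P ∈ T.powerset, ∑ Q ∈ (S \ T).powerset,
            A (P.card + Q.card) / (m.choose (P.card + Q.card) : ℝ) * (-1 : ℝ) ^ P.card :=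
          powerset_split hTS
            (fun r q => A (r + q) / (m.choose (r + q) : ℝ) * (-1 : ℝ) ^ r)
      _ = ∑ r ∈ Finset.range (T.card + 1), (T.card.choose r : ℝ) *
            ∑ q ∈ Finset.range (m - T.card + 1), ((m - T.card).choose q : ℝ) *
              (A (r + q) / (m.choose (r + q) : ℝ) * (-1 : ℝ) ^ r) := by
          rw [Finset.sum_powerset_apply_card
            (f := fun r => ∑ Q ∈ (S \ T).powerset,
              A (r + Q.card) / (m.choose (r + Q.card) : ℝ) * (-1 : ℝ) ^ r)]
          refine Finset.sum_congr rfl fun r _ => ?_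
          rw [Finset.sum_powerset_apply_card
            (f := fun q => A (r + q) / (m.choose (r + q) : ℝ) * (-1 : ℝ) ^ r), hsd]
          rw [nsmul_eq_mul]
          refine congrArg _ (Finset.sum_congr rfl fun q _ => ?_)
          rw [nsmul_eq_mul]
      _ = ∑ t ∈ Finset.range (m + 1),
            (A t / (m.choose t : ℝ)) * kravchuk m t T.card := by
          rw [diag_sum hjm (fun t => A t / (m.choose t : ℝ))]
          rfl
      _ = (∑ t ∈ Finset.range (m + 1), A t * kravchuk m T.card t) / (m.choose T.card : ℝ) := by
          rw [Finset.sum_div]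
          refine Finset.sum_congr rfl fun t ht => ?_
          have ht' : t ≤ m := by simpa [Nat.lt_succ_iff] using ht
          have hsym := kravchuk_symm ht' hjm
          have h1 : ((m.choose t : ℕ) : ℝ) ≠ 0 :=
            Nat.cast_ne_zero.2 (Nat.choose_pos ht').ne'
          have h2 : ((m.choose T.card : ℕ) : ℝ) ≠ 0 :=
            Nat.cast_ne_zero.2 (Nat.choose_pos hjm).ne'
          field_simp
          linear_combination A t * hsym
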